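/- For n ≥ 2, ∑_{r=0}^{n} (−1)^r · (2n/(2n−r)) · C(2n−r, r) · (n−r)! ≥ 0, and for n ≥ 3 the sum is strictly positive. -/

import Mathlib

/-- The absolute value of the `r`-th term of the Touchard sum. -/
def touchardTerm (n r : ℕ) : ℚ :=
  (2 * n / ((2 * n : ℚ) - r)) * Nat.choose (2 * n - r) r * Nat.factorial (n - r)

lemma touchardTerm_zero_of_lt {n r : ℕ} (h : n < r) : touchardTerm n r = 0 := by
  have : Nat.choose (2 * n - r) r = 0 := Nat.choose_eq_zero_of_lt (by omega)
  simp [touchardTerm, this]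

lemma touchardTerm_nonneg (n r : ℕ) : 0 ≤ touchardTerm n r := by
  rcases lt_or_ge n r with h | h
  · rw [touchardTerm_zero_of_lt h]
  · rcases Nat.eq_zero_or_pos n with h0 | h0
    · subst h0; interval_cases r; simp [touchardTerm]
    · have h1 : (0 : ℚ) < (2 * n : ℚ) - r := by
        have hr : (r : ℚ) ≤ (n : ℚ) := by exact_mod_cast h
        have hn : (1 : ℚ) ≤ (n : ℚ) := by exact_mod_cast h0
        linarith
      unfold touchardTerm
      positivity

/-- The key combinatorial inequality behind monotonicity of the terms. -/
lemma touchard_mono_nat (r t : ℕ) (hr : 1 ≤ r) :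
    Nat.choose (r + 2 * t + 1) (r + 1) * (r + 2 * t + 2) ≤
      Nat.choose (r + 2 * t + 2) r * ((t + 1) * (r + 2 * t + 1)) := by
  set X := Nat.choose (r + 2 * t + 1) (r + 1) with hX
  set Y := Nat.choose (r + 2 * t + 2) r with hYdef
  have h1 : (r + 2 * t + 2) * X = Nat.choose (r + 2 * t + 2) (r + 2) * (r + 2) := by
    have := Nat.add_one_mul_choose_eq (r + 2 * t + 1) (r + 1)
    simpa [Nat.succ_eq_add_one] using this
  have h2 : Nat.choose (r + 2 * t + 2) (r + 2) * (r + 2) =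
      Nat.choose (r + 2 * t + 2) (r + 1) * (2 * t + 1) := by
    have := Nat.choose_succ_right_eq (r + 2 * t + 2) (r + 1)
    simpa [show r + 2 * t + 2 - (r + 1) = 2 * t + 1 by omega] using this
  have h3 : Nat.choose (r + 2 * t + 2) (r + 1) * (r + 1) = Y * (2 * t + 2) := by
    have := Nat.choose_succ_right_eq (r + 2 * t + 2) r
    simpa [show r + 2 * t + 2 - r = 2 * t + 2 by omega, hYdef] using this
  have hY : 0 < Y := Nat.choose_pos (by omega)
  have E : X * (r + 2 * t + 2) * (r + 1) = Y * ((2 * t + 2) * (2 * t + 1)) := by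
    calc X * (r + 2 * t + 2) * (r + 1)
        = Nat.choose (r + 2 * t + 2) (r + 2) * (r + 2) * (r + 1) := by
          rw [show X * (r + 2 * t + 2) = (r + 2 * t + 2) * X from Nat.mul_comm _ _, h1]
      _ = Nat.choose (r + 2 * t + 2) (r + 1) * (r + 1) * (2 * t + 1) := by rw [h2]; ring
      _ = Y * (2 * t + 2) * (2 * t + 1) := by rw [h3]
      _ = Y * ((2 * t + 2) * (2 * t + 1)) := by ring
  have key : (2 * t + 2) * (2 * t + 1) ≤ (t + 1) * (r + 2 * t + 1) * (r + 1) := by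
    calc (2 * t + 2) * (2 * t + 1) ≤ (2 * t + 2) * (2 * t + 2) :=
          Nat.mul_le_mul_left _ (by omega)
      _ = (t + 1) * (2 * t + 2) * 2 := by ring
      _ ≤ (t + 1) * (r + 2 * t + 1) * (r + 1) :=
          Nat.mul_le_mul (Nat.mul_le_mul_left _ (by omega)) (by omega)
  have hfin : X * (r + 2 * t + 2) * (r + 1) ≤ Y * ((t + 1) * (r + 2 * t + 1)) * (r + 1) := by
    rw [E]
    calc Y * ((2 * t + 2) * (2 * t + 1)) ≤ Y * ((t + 1) * (r + 2 * t + 1) * (r + 1)) :=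
          Nat.mul_le_mul_left Y key
      _ = Y * ((t + 1) * (r + 2 * t + 1)) * (r + 1) := by ring
  exact Nat.le_of_mul_le_mul_right hfin (by omega)

lemma touchardTerm_mono (n r : ℕ) (hr : 1 ≤ r) :
    touchardTerm n (r + 1) ≤ touchardTerm n r := by
  rcases le_or_gt (r + 1) n with h | h
  · obtain ⟨t, rfl⟩ : ∃ t, n = r + 1 + t := ⟨n - r - 1, by omega⟩
    have e1 : 2 * (r + 1 + t) - r = r + 2 * t + 2 := by omega
    have e2 : 2 * (r + 1 + t) - (r + 1) = r + 2 * t + 1 := by omega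
    have e3 : r + 1 + t - r = t + 1 := by omega
    have e4 : r + 1 + t - (r + 1) = t := by omega
    unfold touchardTerm
    rw [e1, e2, e3, e4]
    have hx : (0:ℚ) ≤ (r:ℚ) := Nat.cast_nonneg r
    have ht : (0:ℚ) ≤ (t:ℚ) := Nat.cast_nonneg t
    have hfacpos : (0:ℚ) < (Nat.factorial t : ℚ) := by exact_mod_cast t.factorial_pos
    have hfs : ((Nat.factorial (t + 1) : ℕ) : ℚ) = ((t:ℚ) + 1) * (Nat.factorial t : ℚ) := by
      rw [Nat.factorial_succ]; push_cast; ring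
    have keyQ : ((Nat.choose (r + 2 * t + 1) (r + 1) : ℕ) : ℚ) * ((r:ℚ) + 2 * (t:ℚ) + 2) ≤
        ((Nat.choose (r + 2 * t + 2) r : ℕ) : ℚ) * (((t:ℚ) + 1) * ((r:ℚ) + 2 * (t:ℚ) + 1)) := by
      exact_mod_cast touchard_mono_nat r t hr
    push_cast [hfs]
    rw [div_mul_eq_mul_div, div_mul_eq_mul_div, div_mul_eq_mul_div, div_mul_eq_mul_div,
      div_le_div_iff₀ (by linarith) (by linarith)]
    nlinarith [mul_le_mul_of_nonneg_left keyQ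
        (show (0:ℚ) ≤ 2 * ((r:ℚ) + 1 + (t:ℚ)) * (Nat.factorial t : ℚ) by positivity),
      hfacpos, hx, ht]
  · rw [touchardTerm_zero_of_lt h]
    exact touchardTerm_nonneg n r

/-- Alternating sums of nonneg decreasing sequences are nonneg. -/
lemma alt_sum_nonneg : ∀ (k : ℕ) (f : ℕ → ℚ), (∀ i, 0 ≤ f i) → (∀ i, f (i + 1) ≤ f i) →
    0 ≤ ∑ i ∈ Finset.range k, (-1 : ℚ) ^ i * f i := by
  intro k
  induction k using Nat.twoStepInduction with
  | zero => intro f _ _; simp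
  | one => intro f h0 _; simpa using h0 0
  | more k ih _ =>
    intro f h0 hd
    have hs : ∑ i ∈ Finset.range (k + 2), (-1 : ℚ) ^ i * f i =
        (∑ i ∈ Finset.range k, (-1 : ℚ) ^ i * f (i + 2)) + (f 0 - f 1) := by
      rw [Finset.sum_range_succ' (fun i => (-1 : ℚ) ^ i * f i) (k + 1),
        Finset.sum_range_succ' (fun i => (-1 : ℚ) ^ (i + 1) * f (i + 1)) k]
      have : ∀ i ∈ Finset.range k, (-1 : ℚ) ^ (i + 1 + 1) * f (i + 1 + 1) =
          (-1 : ℚ) ^ i * f (i + 2) := by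
        intro i _
        rw [pow_succ, pow_succ]
        ring_nf
      rw [Finset.sum_congr rfl this]
      simp [pow_succ]
      ring
    rw [hs]
    have h1 := ih (fun i => f (i + 2)) (fun i => h0 (i + 2)) (fun i => hd (i + 2))
    have h2 := hd 0
    linarith

lemma cast_choose_two (N : ℕ) : ((Nat.choose (N + 2) 2 : ℕ) : ℚ) =
    ((N:ℚ) + 2) * ((N:ℚ) + 1) / 2 := by
  rw [Nat.cast_choose ℚ (by omega : 2 ≤ N + 2)]
  rw [show N + 2 - 2 = N by omega]
  rw [show N + 2 = (N + 1) + 1 by ring, Nat.factorial_succ, Nat.factorial_succ]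
  have : (0:ℚ) < (Nat.factorial N : ℚ) := by exact_mod_cast N.factorial_pos
  field_simp [Nat.factorial]
  push_cast
  ring

lemma cast_choose_three (N : ℕ) : ((Nat.choose (N + 3) 3 : ℕ) : ℚ) =
    ((N:ℚ) + 3) * ((N:ℚ) + 2) * ((N:ℚ) + 1) / 6 := by
  rw [Nat.cast_choose ℚ (by omega : 3 ≤ N + 3)]
  rw [show N + 3 - 3 = N by omega]
  rw [show N + 3 = ((N + 1) + 1) + 1 by ring, Nat.factorial_succ, Nat.factorial_succ,
    Nat.factorial_succ]
  have : (0:ℚ) < (Nat.factorial N : ℚ) := by exact_mod_cast N.factorial_pos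
  field_simp [Nat.factorial]
  push_cast
  ring

lemma cast_choose_four (N : ℕ) : ((Nat.choose (N + 4) 4 : ℕ) : ℚ) =
    ((N:ℚ) + 4) * ((N:ℚ) + 3) * ((N:ℚ) + 2) * ((N:ℚ) + 1) / 24 := by
  rw [Nat.cast_choose ℚ (by omega : 4 ≤ N + 4)]
  rw [show N + 4 - 4 = N by omega]
  rw [show N + 4 = (((N + 1) + 1) + 1) + 1 by ring, Nat.factorial_succ, Nat.factorial_succ,
    Nat.factorial_succ, Nat.factorial_succ]
  have : (0:ℚ) < (Nat.factorial N : ℚ) := by exact_mod_cast N.factorial_pos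
  field_simp [Nat.factorial]
  push_cast
  ring

lemma cast_choose_five (N : ℕ) : ((Nat.choose (N + 5) 5 : ℕ) : ℚ) =
    ((N:ℚ) + 5) * ((N:ℚ) + 4) * ((N:ℚ) + 3) * ((N:ℚ) + 2) * ((N:ℚ) + 1) / 120 := by
  rw [Nat.cast_choose ℚ (by omega : 5 ≤ N + 5)]
  rw [show N + 5 - 5 = N by omega]
  rw [show N + 5 = ((((N + 1) + 1) + 1) + 1) + 1 by ring, Nat.factorial_succ,
    Nat.factorial_succ, Nat.factorial_succ, Nat.factorial_succ, Nat.factorial_succ]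
  have : (0:ℚ) < (Nat.factorial N : ℚ) := by exact_mod_cast N.factorial_pos
  field_simp [Nat.factorial]
  push_cast
  ring

/-- The head (first six terms) of the Touchard sum is positive for `n = m + 5`. -/
lemma touchard_head_pos (m : ℕ) :
    0 < ∑ r ∈ Finset.range 6, (-1 : ℚ) ^ r * touchardTerm (m + 5) r := by
  rw [Finset.sum_range_succ, Finset.sum_range_succ, Finset.sum_range_succ,
    Finset.sum_range_succ, Finset.sum_range_succ, Finset.sum_range_one]
  unfold touchardTerm
  simp only [show 2 * (m + 5) - 0 = 2 * m + 10 from by omega,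
    show 2 * (m + 5) - 1 = 2 * m + 9 from by omega,
    show 2 * (m + 5) - 2 = (2 * m + 6) + 2 from by omega,
    show 2 * (m + 5) - 3 = (2 * m + 4) + 3 from by omega,
    show 2 * (m + 5) - 4 = (2 * m + 2) + 4 from by omega,
    show 2 * (m + 5) - 5 = (2 * m) + 5 from by omega,
    show m + 5 - 0 = m + 5 from by omega,
    show m + 5 - 1 = m + 4 from by omega,
    show m + 5 - 2 = m + 3 from by omega,
    show m + 5 - 3 = m + 2 from by omega,
    show m + 5 - 4 = m + 1 from by omega,
    show m + 5 - 5 = m from by omega,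
    Nat.choose_zero_right, Nat.choose_one_right,
    cast_choose_two, cast_choose_three, cast_choose_four, cast_choose_five]
  simp only [Nat.factorial_succ]
  have hm : (0:ℚ) ≤ (m:ℚ) := Nat.cast_nonneg m
  have hf : (0:ℚ) < (Nat.factorial m : ℚ) := by exact_mod_cast m.factorial_pos
  push_cast
  have d1 : (2 * (m:ℚ) + 10) ≠ 0 := by positivity
  have d2 : (2 * (m:ℚ) + 9) ≠ 0 := by positivity
  have d3 : (2 * (m:ℚ) + 8) ≠ 0 := by positivity
  have d4 : (2 * (m:ℚ) + 7) ≠ 0 := by positivity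
  have d5 : (2 * (m:ℚ) + 6) ≠ 0 := by positivity
  have d6 : (2 * (m:ℚ) + 5) ≠ 0 := by positivity
  have key : (-1:ℚ) ^ 0 *
        (2 * ((m:ℚ) + 5) / (2 * ((m:ℚ) + 5) - 0) * 1 *
          (((m:ℚ) + 4 + 1) * (((m:ℚ) + 3 + 1) * (((m:ℚ) + 2 + 1) * (((m:ℚ) + 1 + 1) *
            (((m:ℚ) + 1) * (Nat.factorial m : ℚ))))))) +
      (-1) ^ 1 *
        (2 * ((m:ℚ) + 5) / (2 * ((m:ℚ) + 5) - 1) * (2 * (m:ℚ) + 9) *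
          (((m:ℚ) + 3 + 1) * (((m:ℚ) + 2 + 1) * (((m:ℚ) + 1 + 1) *
            (((m:ℚ) + 1) * (Nat.factorial m : ℚ)))))) +
      (-1) ^ 2 *
        (2 * ((m:ℚ) + 5) / (2 * ((m:ℚ) + 5) - 2) *
          ((2 * (m:ℚ) + 6 + 2) * (2 * (m:ℚ) + 6 + 1) / 2) *
          (((m:ℚ) + 2 + 1) * (((m:ℚ) + 1 + 1) * (((m:ℚ) + 1) * (Nat.factorial m : ℚ))))) +
      (-1) ^ 3 *
        (2 * ((m:ℚ) + 5) / (2 * ((m:ℚ) + 5) - 3) *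
          ((2 * (m:ℚ) + 4 + 3) * (2 * (m:ℚ) + 4 + 2) * (2 * (m:ℚ) + 4 + 1) / 6) *
          (((m:ℚ) + 1 + 1) * (((m:ℚ) + 1) * (Nat.factorial m : ℚ)))) +
      (-1) ^ 4 *
        (2 * ((m:ℚ) + 5) / (2 * ((m:ℚ) + 5) - 4) *
          ((2 * (m:ℚ) + 2 + 4) * (2 * (m:ℚ) + 2 + 3) * (2 * (m:ℚ) + 2 + 2) *
            (2 * (m:ℚ) + 2 + 1) / 24) *
          (((m:ℚ) + 1) * (Nat.factorial m : ℚ))) +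
      (-1) ^ 5 *
        (2 * ((m:ℚ) + 5) / (2 * ((m:ℚ) + 5) - 5) *
          ((2 * (m:ℚ) + 5) * (2 * (m:ℚ) + 4) * (2 * (m:ℚ) + 3) * (2 * (m:ℚ) + 2) *
            (2 * (m:ℚ) + 1) / 120) * (Nat.factorial m : ℚ)) =
      (((m:ℚ) + 5) * ((m:ℚ) + 2) * ((m:ℚ) + 1) * (2 * (m:ℚ) ^ 2 + 24 * (m:ℚ) + 39) / 30) *
        (Nat.factorial m : ℚ) := by
    have e1 : 2 * ((m:ℚ) + 5) - 0 = 2 * (m:ℚ) + 10 := by ring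
    have e2 : 2 * ((m:ℚ) + 5) - 1 = 2 * (m:ℚ) + 9 := by ring
    have e3 : 2 * ((m:ℚ) + 5) - 2 = 2 * (m:ℚ) + 8 := by ring
    have e4 : 2 * ((m:ℚ) + 5) - 3 = 2 * (m:ℚ) + 7 := by ring
    have e5 : 2 * ((m:ℚ) + 5) - 4 = 2 * (m:ℚ) + 6 := by ring
    have e6 : 2 * ((m:ℚ) + 5) - 5 = 2 * (m:ℚ) + 5 := by ring
    rw [e1, e2, e3, e4, e5, e6]
    field_simp
    ring
  rw [key]
  positivity

theorem touchard_sum_nonneg (n : ℕ) (hn : 2 ≤ n) :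
    0 ≤ ∑ r ∈ Finset.range (n + 1),
        (-1 : ℚ) ^ r * (2 * n / ((2 * n : ℚ) - r)) * Nat.choose (2 * n - r) r *
          Nat.factorial (n - r) ∧
      (3 ≤ n →
        0 < ∑ r ∈ Finset.range (n + 1),
          (-1 : ℚ) ^ r * (2 * n / ((2 * n : ℚ) - r)) * Nat.choose (2 * n - r) r *
            Nat.factorial (n - r)) := by
  have hsum : ∀ N : ℕ, (∑ r ∈ Finset.range (N + 1),
      (-1 : ℚ) ^ r * (2 * N / ((2 * N : ℚ) - r)) * Nat.choose (2 * N - r) r *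
        Nat.factorial (N - r)) =
      ∑ r ∈ Finset.range (N + 1), (-1 : ℚ) ^ r * touchardTerm N r := by
    intro N
    refine Finset.sum_congr rfl fun r _ => ?_
    unfold touchardTerm
    ring
  have key : 3 ≤ n → 0 < ∑ r ∈ Finset.range (n + 1),
      (-1 : ℚ) ^ r * (2 * n / ((2 * n : ℚ) - r)) * Nat.choose (2 * n - r) r *
        Nat.factorial (n - r) := by
    intro h3
    rw [hsum]
    rcases le_or_gt 5 n with h5 | h5
    · obtain ⟨m, rfl⟩ : ∃ m, n = m + 5 := ⟨n - 5, by omega⟩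
      rw [← Finset.sum_range_add_sum_Ico _ (show 6 ≤ m + 5 + 1 by omega)]
      have tail_eq : ∑ r ∈ Finset.Ico 6 (m + 5 + 1), (-1 : ℚ) ^ r * touchardTerm (m + 5) r =
          ∑ i ∈ Finset.range m, (-1 : ℚ) ^ i * touchardTerm (m + 5) (6 + i) := by
        rw [Finset.sum_Ico_eq_sum_range]
        rw [show m + 5 + 1 - 6 = m from by omega]
        refine Finset.sum_congr rfl fun i _ => ?_
        rw [pow_add]
        norm_num
      have tail_nonneg : 0 ≤ ∑ i ∈ Finset.range m, (-1 : ℚ) ^ i * touchardTerm (m + 5) (6 + i) := by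
        refine alt_sum_nonneg m (fun i => touchardTerm (m + 5) (6 + i))
          (fun i => touchardTerm_nonneg _ _) (fun i => ?_)
        have := touchardTerm_mono (m + 5) (6 + i) (by omega)
        simpa [show 6 + i + 1 = 6 + (i + 1) from by omega] using this
      have hh := touchard_head_pos m
      rw [tail_eq]
      linarith
    · interval_cases n
      · rw [Finset.sum_range_succ, Finset.sum_range_succ, Finset.sum_range_succ,
          Finset.sum_range_one]
        unfold touchardTerm
        norm_num [Nat.factorial, Nat.choose_self, Nat.choose_one_right,
          show Nat.choose 4 2 = 6 from by decide]
      · rw [Finset.sum_range_succ, Finset.sum_range_succ, Finset.sum_range_succ,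
          Finset.sum_range_succ, Finset.sum_range_one]
        unfold touchardTerm
        norm_num [Nat.factorial, Nat.choose_self, Nat.choose_one_right,
          show Nat.choose 6 2 = 15 from by decide,
          show Nat.choose 5 3 = 10 from by decide]
  constructor
  · rcases eq_or_lt_of_le hn with h2 | h3
    · rw [← h2]
      rw [Finset.sum_range_succ, Finset.sum_range_succ, Finset.sum_range_one]
      norm_num [Nat.factorial, Nat.choose_self, Nat.choose_one_right]
    · exact (key (by omega)).le
  · exact key
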